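/- Let A, B be symmetric positive definite real d×d matrices with A − B positive semidefinite, and let 0 < α < 1. Then ln det((α·1 + (1−α)·A·B^{-1})) + ln det(α·1 + (1−α)·B·A^{-1}) ≥ 0, i.e., det(αB + (1−α)A) · det(αA + (1−α)B) ≥ det(A) · det(B). -/

import Mathlib

open Matrix

/-- Key lemma: for a real symmetric PSD matrix C,
    det C ≤ det(α•1+(1-α)•C) * det(α•C+(1-α)•1). -/
lemma key_psd (d : ℕ) (α : ℝ) (hα0 : 0 < α) (hα1 : α < 1)
    (C : Matrix (Fin d) (Fin d) ℝ) (hC : C.PosSemidef) :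
    C.det ≤ (α • (1 : Matrix (Fin d) (Fin d) ℝ) + (1 - α) • C).det *
      (α • C + (1 - α) • (1 : Matrix (Fin d) (Fin d) ℝ)).det := by
  have hH := hC.1
  set U : Matrix (Fin d) (Fin d) ℝ := (hH.eigenvectorUnitary : Matrix (Fin d) (Fin d) ℝ) with hU
  set μ : Fin d → ℝ := hH.eigenvalues with hμ
  have hspec : C = U * diagonal μ * star U := by
    have := hH.spectral_theorem
    rw [Unitary.conjStarAlgAut_apply] at this
    exact this
  have hUU : U * star U = 1 := mem_unitaryGroup_iff.mp hH.eigenvectorUnitary.2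
  have hdetU : U.det * (star U).det = 1 := by
    rw [← det_mul, hUU, det_one]
  have hone : (1 : Matrix (Fin d) (Fin d) ℝ) = U * 1 * star U := by
    rw [mul_one, hUU]
  have hconj : ∀ (D : Matrix (Fin d) (Fin d) ℝ), (U * D * star U).det = D.det := by
    intro D
    rw [det_mul, det_mul, mul_right_comm, hdetU, one_mul]
  have hcomb : ∀ a b : ℝ,
      a • (1 : Matrix (Fin d) (Fin d) ℝ) + b • C
        = U * diagonal (fun i => a + b * μ i) * star U := by
    intro a b
    have hdiag : a • (1 : Matrix (Fin d) (Fin d) ℝ) + b • diagonal μ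
        = diagonal (fun i => a + b * μ i) := by
      ext i j
      by_cases h : i = j <;>
        simp [Matrix.diagonal_apply, Matrix.one_apply, h]
    rw [hspec]
    conv_lhs => rw [hone]
    rw [← hdiag, Matrix.mul_add, Matrix.add_mul, mul_smul_comm, smul_mul_assoc,
      mul_smul_comm, smul_mul_assoc]
  have h1 : (α • (1 : Matrix (Fin d) (Fin d) ℝ) + (1 - α) • C).det
      = ∏ i, (α + (1 - α) * μ i) := by
    rw [hcomb, hconj, det_diagonal]
  have h2 : (α • C + (1 - α) • (1 : Matrix (Fin d) (Fin d) ℝ)).det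
      = ∏ i, ((1 - α) + α * μ i) := by
    rw [add_comm (α • C), hcomb, hconj, det_diagonal]
  have h3 : C.det = ∏ i, μ i := by
    rw [hspec, hconj, det_diagonal]
  rw [h1, h2, h3, ← Finset.prod_mul_distrib]
  apply Finset.prod_le_prod
  · intro i _; exact hC.eigenvalues_nonneg i
  · intro i _
    have hμi := hC.eigenvalues_nonneg i
    nlinarith [sq_nonneg (μ i - 1), mul_pos hα0 (by linarith : (0:ℝ) < 1 - α)]

theorem stmt_10 (d : ℕ) (α : ℝ) (hα0 : 0 < α) (hα1 : α < 1)
    (A B : Matrix (Fin d) (Fin d) ℝ) (hA : A.PosDef) (hB : B.PosDef)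
    (hAB : (A - B).PosSemidef) :
    0 ≤ Real.log (α • (1 : Matrix (Fin d) (Fin d) ℝ) + (1 - α) • (A * B⁻¹)).det +
        Real.log (α • (1 : Matrix (Fin d) (Fin d) ℝ) + (1 - α) • (B * A⁻¹)).det ∧
    A.det * B.det ≤ (α • B + (1 - α) • A).det * (α • A + (1 - α) • B).det := by
  set S := (open scoped MatrixOrder in CFC.sqrt B) with hSdef
  have hS : S.PosSemidef := by open scoped MatrixOrder in exact (CFC.sqrt_nonneg B).posSemidef
  have hSS : S * S = B := by
    open scoped MatrixOrder in exact CFC.sqrt_mul_sqrt_self B hB.posSemidef.nonneg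
  have hdetB : S.det * S.det = B.det := by rw [← det_mul, hSS]
  have hBdpos : 0 < B.det := hB.det_pos
  have hAdpos : 0 < A.det := hA.det_pos
  have hdS : S.det ≠ 0 := by
    intro h; rw [h, mul_zero] at hdetB; exact hBdpos.ne' hdetB.symm
  have huS : IsUnit S.det := isUnit_iff_ne_zero.mpr hdS
  set C := S⁻¹ * A * S⁻¹ with hCdef
  have hCpsd : C.PosSemidef := by
    have := hA.posSemidef.mul_mul_conjTranspose_same S⁻¹
    rwa [conjTranspose_nonsing_inv, hS.1.eq] at this
  have hSCS : S * C * S = A := by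
    have h1 : S * C * S = (S * S⁻¹) * A * (S⁻¹ * S) := by
      simp only [hCdef, mul_assoc]
    rw [h1, mul_nonsing_inv _ huS, nonsing_inv_mul _ huS, one_mul, mul_one]
  have hcomb : ∀ a b : ℝ, a • B + b • A
      = S * (a • (1 : Matrix (Fin d) (Fin d) ℝ) + b • C) * S := by
    intro a b
    rw [Matrix.mul_add, Matrix.add_mul, mul_smul_comm, smul_mul_assoc,
      mul_smul_comm, smul_mul_assoc, mul_one, hSS, hSCS]
  set t := S.det * S.det with htdef
  have ht : 0 < t := hdetB ▸ hBdpos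
  have hdet : ∀ a b : ℝ, (a • B + b • A).det
      = t * (a • (1 : Matrix (Fin d) (Fin d) ℝ) + b • C).det := by
    intro a b
    rw [hcomb a b, det_mul, det_mul]; ring
  have hdetA : A.det = t * C.det := by
    rw [← hSCS, det_mul, det_mul]; ring
  set X := (α • (1 : Matrix (Fin d) (Fin d) ℝ) + (1 - α) • C).det with hX
  set Y := (α • C + (1 - α) • (1 : Matrix (Fin d) (Fin d) ℝ)).det with hY
  have hkey : C.det ≤ X * Y := key_psd d α hα0 hα1 C hCpsd
  have hD1 : (α • B + (1 - α) • A).det = t * X := hdet α (1 - α)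
  have hD2 : (α • A + (1 - α) • B).det = t * Y := by
    rw [add_comm, hdet (1 - α) α, add_comm ((1-α) • (1 : Matrix (Fin d) (Fin d) ℝ))]
  have part2 : A.det * B.det ≤ (α • B + (1 - α) • A).det * (α • A + (1 - α) • B).det := by
    rw [hD1, hD2, hdetA, ← hdetB]
    nlinarith [mul_le_mul_of_nonneg_left hkey (mul_pos ht ht).le]
  refine ⟨?_, part2⟩
  have huA : IsUnit A.det := isUnit_iff_ne_zero.mpr hAdpos.ne'
  have huB : IsUnit B.det := isUnit_iff_ne_zero.mpr hBdpos.ne'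
  have hx : α • (1 : Matrix (Fin d) (Fin d) ℝ) + (1 - α) • (A * B⁻¹)
      = (α • B + (1 - α) • A) * B⁻¹ := by
    rw [Matrix.add_mul, smul_mul_assoc, smul_mul_assoc, mul_nonsing_inv _ huB]
  have hy : α • (1 : Matrix (Fin d) (Fin d) ℝ) + (1 - α) • (B * A⁻¹)
      = (α • A + (1 - α) • B) * A⁻¹ := by
    rw [Matrix.add_mul, smul_mul_assoc, smul_mul_assoc, mul_nonsing_inv _ huA]
  rw [hx, hy, det_mul, det_mul, det_nonsing_inv, det_nonsing_inv, Ring.inverse_eq_inv, Ring.inverse_eq_inv]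
  set x := (α • B + (1 - α) • A).det * B.det⁻¹ with hxv
  set y := (α • A + (1 - α) • B).det * A.det⁻¹ with hyv
  have hxy : 1 ≤ x * y := by
    rw [hxv, hyv]
    have h1 : (α • B + (1 - α) • A).det * B.det⁻¹ * ((α • A + (1 - α) • B).det * A.det⁻¹)
        = ((α • B + (1 - α) • A).det * (α • A + (1 - α) • B).det) / (A.det * B.det) := by
      rw [div_eq_mul_inv, mul_inv]; ring
    rw [h1, le_div_iff₀ (by positivity)]
    linarith [part2]
  have hx0 : x ≠ 0 := by
    intro h; rw [h, zero_mul] at hxy; linarith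
  have hy0 : y ≠ 0 := by
    intro h; rw [h, mul_zero] at hxy; linarith
  rw [← Real.log_mul hx0 hy0]
  exact Real.log_nonneg hxy
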